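/- For a finite tree T \subset \Omega written as the grafting T = \{\emptyset\} \cup \bigcup_k k T_k, the statistic |D(T)| satisfies the recursion |D(T)| = \sum_{k=1}^m |D(T_k)| + \sum_{1 \le k' < k \le m} |T_{k'}| \cdot ((m-1)|T_k| + 1). -/

import Mathlib

open scoped Classical

/-- A (finite) tree: a finite set of words over `{1,…,m}` closed under prefixes. -/
def IsTree (m : ℕ) (T : Finset (List (Fin m))) : Prop :=
  ∀ ω ∈ T, ∀ ω' : List (Fin m), ω' <+: ω → ω' ∈ T

/-- The set `D(T)` of triples `(ω,k,ω')` with `ω ∈ T`, `ωk ∉ T`, `ω' ∈ T`,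
`ω' <_lex ωk`, and `ω'` not a prefix of `ω`. -/
noncomputable def Dset (m : ℕ) (T : Finset (List (Fin m))) :
    Finset ((List (Fin m) × Fin m) × List (Fin m)) :=
  ((T ×ˢ (Finset.univ : Finset (Fin m))) ×ˢ T).filter fun x =>
    x.1.1 ++ [x.1.2] ∉ T ∧ List.Lex (· < ·) x.2 (x.1.1 ++ [x.1.2]) ∧ ¬ x.2 <+: x.1.1

open Finset in
private lemma tree_edge_card {m : ℕ} (hm : 1 ≤ m) (S : Finset (List (Fin m)))
    (hS : IsTree m S) (hne : S.Nonempty) :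
    ((S ×ˢ (univ : Finset (Fin m))).filter fun p => p.1 ++ [p.2] ∉ S).card
      = (m - 1) * S.card + 1 := by
  classical
  have hnil : ([] : List (Fin m)) ∈ S := by
    obtain ⟨x, hx⟩ := hne
    exact hS x hx [] List.nil_prefix
  have hgood : ((S ×ˢ (univ : Finset (Fin m))).filter fun p => p.1 ++ [p.2] ∈ S).card
      = S.card - 1 := by
    rw [← Finset.card_erase_of_mem hnil]
    apply Finset.card_bij (fun p _ => p.1 ++ [p.2])
    · intro p hp
      simp only [mem_filter, mem_product] at hp
      simp only [mem_erase]
      exact ⟨by simp, hp.2⟩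
    · intro p hp q hq h
      obtain ⟨h1, h2⟩ := List.append_inj' h rfl
      have h2' : p.2 = q.2 := by injection h2
      exact Prod.ext h1 h2'
    · intro σ hσ
      simp only [mem_erase] at hσ
      obtain ⟨hne', hσS⟩ := hσ
      refine ⟨(σ.dropLast, σ.getLast hne'), ?_, List.dropLast_append_getLast hne'⟩
      simp only [mem_filter, mem_product]
      refine ⟨⟨hS σ hσS _ (List.dropLast_prefix σ), mem_univ _⟩, ?_⟩
      rw [List.dropLast_append_getLast hne']
      exact hσS
  have hsplit := Finset.card_filter_add_card_filter_not
    (s := S ×ˢ (univ : Finset (Fin m))) (p := fun p => p.1 ++ [p.2] ∈ S)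
  have htot : (S ×ˢ (univ : Finset (Fin m))).card = S.card * m := by
    simp [Finset.card_product]
  have hmul : (m - 1) * S.card = m * S.card - S.card := Nat.sub_one_mul m S.card
  have hle : S.card ≤ m * S.card := Nat.le_mul_of_pos_left _ hm
  have hs1 : 1 ≤ S.card := hne.card_pos
  have hcomm : S.card * m = m * S.card := Nat.mul_comm _ _
  omega

open Finset in
/-- For the grafting `T = {∅} ∪ ⋃_k k·T_k`, the statistic `|D(T)|` satisfies
`|D(T)| = ∑_k |D(T_k)| + ∑_{k'<k} |T_{k'}|·((m-1)|T_k|+1)`. -/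
theorem Dset_card_grafting (m : ℕ) (hm : 1 ≤ m)
    (T : Finset (List (Fin m))) (Ts : Fin m → Finset (List (Fin m)))
    (hTs : ∀ k, IsTree m (Ts k))
    (hgraft : T = insert [] (Finset.univ.biUnion fun k => (Ts k).image fun ω => k :: ω)) :
    (Dset m T).card =
      (∑ k, (Dset m (Ts k)).card) +
        ∑ k, ∑ k' ∈ Finset.univ.filter (· < k),
          (Ts k').card * ((m - 1) * (Ts k).card + 1) := by
  classical
  have hnilT : ([] : List (Fin m)) ∈ T := by rw [hgraft]; exact mem_insert_self _ _
  have hcons : ∀ (k : Fin m) (σ : List (Fin m)), k :: σ ∈ T ↔ σ ∈ Ts k := by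
    intro k σ
    rw [hgraft]
    simp [List.cons.injEq, eq_comm]
  have hTmem : ∀ x ∈ T, x = [] ∨ ∃ j τ, τ ∈ Ts j ∧ x = j :: τ := by
    intro x hx
    rw [hgraft] at hx
    simp only [mem_insert, mem_biUnion, mem_univ, mem_image, true_and] at hx
    rcases hx with h | ⟨j, τ, hτ, h⟩
    · exact Or.inl h
    · exact Or.inr ⟨j, τ, hτ, h.symm⟩
  have hroot : ∀ k, (Ts k).Nonempty → ([] : List (Fin m)) ∈ Ts k := by
    rintro k ⟨x, hx⟩
    exact hTs k x hx [] List.nil_prefix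
  have hmemD : ∀ (S : Finset (List (Fin m))) (x : (List (Fin m) × Fin m) × List (Fin m)),
      x ∈ Dset m S ↔ x.1.1 ∈ S ∧ x.2 ∈ S ∧ x.1.1 ++ [x.1.2] ∉ S ∧
        List.Lex (· < ·) x.2 (x.1.1 ++ [x.1.2]) ∧ ¬ x.2 <+: x.1.1 := by
    intro S x
    simp only [Dset, mem_filter, mem_product, mem_univ, and_true]
    tauto
  -- the "boundary pairs" with root key k
  set E : Fin m → Finset (List (Fin m) × Fin m) := fun k =>
    ((T ×ˢ (univ : Finset (Fin m))).filter
      fun p => p.1 ++ [p.2] ∉ T ∧ p.1.headD p.2 = k) with hE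
  have hEcard : ∀ k, (E k).card = (m - 1) * (Ts k).card + 1 := by
    intro k
    by_cases hk : (Ts k).Nonempty
    · have heq : E k = (((Ts k) ×ˢ (univ : Finset (Fin m))).filter
          fun p => p.1 ++ [p.2] ∉ Ts k).image fun p => (k :: p.1, p.2) := by
        ext ⟨ω, a⟩
        simp only [hE, mem_filter, mem_product, mem_univ, and_true, mem_image, Prod.mk.injEq]
        constructor
        · rintro ⟨hωT, hna, hhead⟩
          rcases hTmem ω hωT with rfl | ⟨j, τ, hτ, rfl⟩
          · simp only [List.headD] at hhead
            subst hhead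
            exact absurd ((hcons a []).mpr (hroot _ hk)) (by simpa using hna)
          · simp only [List.headD] at hhead
            subst hhead
            refine ⟨(τ, a), ⟨⟨hτ, ?_⟩, rfl, rfl⟩⟩
            intro hc
            exact hna ((hcons j (τ ++ [a])).mpr hc)
        · rintro ⟨⟨τ, b⟩, ⟨⟨hτ, hno⟩, h1, h2⟩⟩
          subst h2
          rw [← h1]
          refine ⟨(hcons k τ).mpr hτ, ?_, rfl⟩
          intro hc
          exact hno ((hcons k (τ ++ [b])).mp hc)
      rw [heq, Finset.card_image_of_injective _ ?_, tree_edge_card hm (Ts k) (hTs k) hk]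
      intro p q h
      simp only [Prod.mk.injEq, List.cons.injEq, true_and] at h
      exact Prod.ext h.1 h.2
    · have hkE : Ts k = ∅ := not_nonempty_iff_eq_empty.mp hk
      have heq : E k = {([], k)} := by
        ext ⟨ω, a⟩
        simp only [hE, mem_filter, mem_product, mem_univ, and_true, mem_singleton,
          Prod.mk.injEq]
        constructor
        · rintro ⟨hωT, hna, hhead⟩
          rcases hTmem ω hωT with rfl | ⟨j, τ, hτ, rfl⟩
          · simp only [List.headD] at hhead
            exact ⟨rfl, hhead⟩
          · simp only [List.headD] at hhead
            subst hhead
            rw [hkE] at hτ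
            exact absurd hτ (notMem_empty _)
        · rintro ⟨rfl, rfl⟩
          refine ⟨hnilT, ?_, rfl⟩
          intro hc
          have := (hcons a []).mp (by simpa using hc)
          rw [hkE] at this
          exact notMem_empty _ this
      rw [heq, hkE]
      simp
  -- classify triples by root keys
  set g : ((List (Fin m) × Fin m) × List (Fin m)) → Fin m × Fin m :=
    fun x => (x.1.1.headD x.1.2, x.2.headD x.1.2) with hg
  have hfibsum : (Dset m T).card
      = ∑ p : Fin m × Fin m, ((Dset m T).filter fun x => g x = p).card :=
    Finset.card_eq_sum_card_fiberwise fun x _ => mem_univ _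
  have hfiber : ∀ k k' : Fin m, ((Dset m T).filter fun x => g x = (k, k')).card =
      if k' = k then (Dset m (Ts k)).card
      else if k' < k then (E k).card * (Ts k').card else 0 := by
    intro k k'
    by_cases hkk : k' = k
    · subst hkk
      rw [if_pos rfl]
      have heq : (Dset m T).filter (fun x => g x = (k', k'))
          = (Dset m (Ts k')).image fun x => ((k' :: x.1.1, x.1.2), k' :: x.2) := by
        ext ⟨⟨ω, a⟩, σ'⟩
        simp only [mem_filter, mem_image, hmemD, hg, Prod.mk.injEq]
        constructor
        · rintro ⟨⟨hωT, hσ'T, hna, hlex, hpre⟩, hk1, hk2⟩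
          -- σ' cannot be []
          rcases hTmem σ' hσ'T with rfl | ⟨j', σ, hσ, rfl⟩
          · exact absurd List.nil_prefix hpre
          simp only [List.headD] at hk2
          subst hk2
          rcases hTmem ω hωT with rfl | ⟨j, τ, hτ, rfl⟩
          · -- ω = []: then a = k' and Lex (k'::σ) [k'] is impossible
            simp only [List.headD] at hk1
            subst hk1
            simp only [List.nil_append] at hlex
            cases hlex with
            | cons h => exact absurd h (fun h' => by cases h')
            | rel h => exact absurd h (lt_irrefl _)
          · simp only [List.headD] at hk1
            subst hk1
            refine ⟨((τ, a), σ), ⟨hτ, hσ, ?_, ?_, ?_⟩, ⟨rfl, rfl⟩, rfl⟩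
            · intro hc
              exact hna (by simpa using (hcons j (τ ++ [a])).mpr hc)
            · have hlex' : List.Lex (· < ·) (j :: σ) (j :: (τ ++ [a])) := by
                simpa using hlex
              cases hlex' with
              | cons h => exact h
              | rel h => exact absurd h (lt_irrefl _)
            · intro hc
              exact hpre (List.cons_prefix_cons.mpr ⟨rfl, hc⟩)
        · rintro ⟨⟨⟨τ, b⟩, σ⟩, ⟨hτ, hσ, hna, hlex, hpre⟩, h1, h2⟩
          obtain ⟨h1a, h1b⟩ := h1
          subst h2
          rw [← h1a, ← h1b]
          refine ⟨⟨(hcons k' τ).mpr hτ, (hcons k' σ).mpr hσ, ?_, ?_, ?_⟩, rfl, rfl⟩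
          · intro hc
            exact hna ((hcons k' (τ ++ [b])).mp (by simpa using hc))
          · simpa using List.Lex.cons (a := k') hlex
          · intro hc
            exact hpre (List.cons_prefix_cons.mp hc).2
      rw [heq, Finset.card_image_of_injective]
      intro p q h
      simp only [Prod.mk.injEq, List.cons.injEq, true_and] at h
      exact Prod.ext (Prod.ext h.1.1 h.1.2) h.2
    · rw [if_neg hkk]
      by_cases hlt : k' < k
      · rw [if_pos hlt]
        have heq : (Dset m T).filter (fun x => g x = (k, k'))
            = (E k) ×ˢ ((Ts k').image fun σ => k' :: σ) := by
          ext ⟨⟨ω, a⟩, ω'⟩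
          simp only [mem_filter, mem_product, mem_image, hmemD, hg, hE, Prod.mk.injEq,
            mem_univ, and_true]
          constructor
          · rintro ⟨⟨hωT, hω'T, hna, hlex, hpre⟩, hk1, hk2⟩
            rcases hTmem ω' hω'T with rfl | ⟨j', σ, hσ, rfl⟩
            · exact absurd List.nil_prefix hpre
            simp only [List.headD] at hk2
            subst hk2
            exact ⟨⟨hωT, hna, hk1⟩, σ, hσ, rfl⟩
          · rintro ⟨⟨hωT, hna, hk1⟩, σ, hσ, rfl⟩
            have hω'T : k' :: σ ∈ T := (hcons k' σ).mpr hσ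
            rcases hTmem ω hωT with rfl | ⟨j, τ, hτ, rfl⟩
            · simp only [List.headD] at hk1
              subst hk1
              refine ⟨⟨hωT, hω'T, hna, ?_, ?_⟩, rfl, rfl⟩
              · simpa using List.Lex.rel hlt
              · intro hc
                have := List.prefix_nil.mp hc
                simp at this
            · simp only [List.headD] at hk1
              subst hk1
              refine ⟨⟨hωT, hω'T, hna, ?_, ?_⟩, rfl, rfl⟩
              · simpa using List.Lex.rel hlt
              · intro hc
                exact absurd (List.cons_prefix_cons.mp hc).1 (ne_of_lt hlt)
        rw [heq, Finset.card_product, Finset.card_image_of_injective _ (List.cons_injective)]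
      · rw [if_neg hlt]
        rw [Finset.card_eq_zero, Finset.eq_empty_iff_forall_notMem]
        rintro ⟨⟨ω, a⟩, ω'⟩ hx
        simp only [mem_filter, hmemD, hg, Prod.mk.injEq] at hx
        obtain ⟨⟨hωT, hω'T, hna, hlex, hpre⟩, hk1, hk2⟩ := hx
        rcases hTmem ω' hω'T with rfl | ⟨j', σ, hσ, rfl⟩
        · exact absurd List.nil_prefix hpre
        simp only [List.headD] at hk2
        subst hk2
        have hhead : ∃ rest, ω ++ [a] = k :: rest := by
          rcases hTmem ω hωT with rfl | ⟨j, τ, hτ, rfl⟩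
          · simp only [List.headD] at hk1
            subst hk1
            exact ⟨[], rfl⟩
          · simp only [List.headD] at hk1
            subst hk1
            exact ⟨τ ++ [a], rfl⟩
        obtain ⟨rest, hrest⟩ := hhead
        rw [hrest] at hlex
        cases hlex with
        | cons h => exact hkk rfl
        | rel h => exact hlt h
  rw [hfibsum, Fintype.sum_prod_type]
  have hsum : ∀ k : Fin m, (∑ k' : Fin m, ((Dset m T).filter fun x => g x = (k, k')).card)
      = (Dset m (Ts k)).card + ∑ k' ∈ univ.filter (· < k), (E k).card * (Ts k').card := by
    intro k
    have hterm : ∀ k' : Fin m, ((Dset m T).filter fun x => g x = (k, k')).card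
        = (if k' = k then (Dset m (Ts k)).card else 0)
          + (if k' < k then (E k).card * (Ts k').card else 0) := by
      intro k'
      rw [hfiber k k']
      by_cases h : k' = k
      · subst h; simp
      · simp [h]
    rw [Finset.sum_congr rfl fun k' _ => hterm k', Finset.sum_add_distrib,
      Finset.sum_ite_eq' univ k fun _ => (Dset m (Ts k)).card, if_pos (mem_univ k),
      ← Finset.sum_filter]
  rw [Finset.sum_congr rfl fun k _ => hsum k, Finset.sum_add_distrib]
  congr 1
  refine Finset.sum_congr rfl fun k _ => Finset.sum_congr rfl fun k' _ => ?_
  rw [hEcard k, Nat.mul_comm]
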